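/- Let X and Y be locally compact Hausdorff spaces and φ : X → Y a surjective local homeomorphism, and let λ be a Radon measure on Y. Then there is a unique measure φ*(λ) on X such that for every open U ⊆ X on which φ restricts to a homeomorphism and every f ∈ C_c(X) supported in U, ∫_X f dφ*(λ) = ∫_Y f∘(φ|_U)⁻¹ extended by zero dλ. -/

import Mathlib

set_option linter.unusedSectionVars false

open MeasureTheory Set Function
open scoped ENNReal NNReal

noncomputable section StmtAux

variable {X Y : Type*} [TopologicalSpace X] [TopologicalSpace Y]

/-- The number of points of `A` in the fiber of `φ` over `y`, as an `ℝ≥0∞`. -/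
def stmtFiberCount (φ : X → Y) (A : Set X) : Y → ℝ≥0∞ :=
  fun y => ((A ∩ φ ⁻¹' {y}).encard : ℝ≥0∞)

lemma stmtFiberCount_mono {φ : X → Y} {A B : Set X} (h : A ⊆ B) :
    stmtFiberCount φ A ≤ stmtFiberCount φ B := fun y => by
  simp only [stmtFiberCount, ENat.toENNReal_le]
  exact Set.encard_mono (inter_subset_inter_left _ h)

lemma stmtFiberCount_chart {φ : X → Y} {U A : Set X} (hinj : InjOn φ U) (hA : A ⊆ U) :
    stmtFiberCount φ A = (φ '' A).indicator 1 := by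
  funext y
  by_cases hy : y ∈ φ '' A
  · obtain ⟨x, hxA, rfl⟩ := hy
    have h1 : A ∩ φ ⁻¹' {φ x} = {x} := by
      ext z
      constructor
      · rintro ⟨hzA, hz⟩
        exact hinj (hA hzA) (hA hxA) hz
      · rintro rfl; exact ⟨hxA, rfl⟩
    simp [stmtFiberCount, h1, Set.indicator_of_mem (mem_image_of_mem φ hxA)]
  · have h1 : A ∩ φ ⁻¹' {y} = ∅ := by
      ext z
      simp only [mem_inter_iff, mem_preimage, mem_singleton_iff, mem_empty_iff_false, iff_false,
        not_and]
      rintro hzA rfl; exact hy (mem_image_of_mem φ hzA)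
    simp [stmtFiberCount, h1, Set.indicator_of_notMem hy]

lemma stmtFiberCount_union {φ : X → Y} {A B : Set X} (h : Disjoint A B) :
    stmtFiberCount φ (A ∪ B) = stmtFiberCount φ A + stmtFiberCount φ B := by
  funext y
  have h1 : ((A ∪ B) ∩ φ ⁻¹' {y}) = (A ∩ φ ⁻¹' {y}) ∪ (B ∩ φ ⁻¹' {y}) :=
    union_inter_distrib_right ..
  simp only [stmtFiberCount, Pi.add_apply, h1,
    Set.encard_union_eq (h.mono inter_subset_left inter_subset_left)]
  exact_mod_cast rfl

lemma stmtFiberCount_union_le {φ : X → Y} (A B : Set X) :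
    stmtFiberCount φ (A ∪ B) ≤ stmtFiberCount φ A + stmtFiberCount φ B := by
  intro y
  have h1 : ((A ∪ B) ∩ φ ⁻¹' {y}) = (A ∩ φ ⁻¹' {y}) ∪ (B ∩ φ ⁻¹' {y}) :=
    union_inter_distrib_right ..
  simp only [stmtFiberCount, Pi.add_apply, h1]
  exact_mod_cast Set.encard_union_le _ _

lemma stmtFiberCount_biUnion {φ : X → Y} {ι : Type*} (s : Finset ι) (B : ι → Set X)
    (hd : (↑s : Set ι).Pairwise (Disjoint on B)) :
    stmtFiberCount φ (⋃ i ∈ s, B i) = ∑ i ∈ s, stmtFiberCount φ (B i) := by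
  classical
  induction s using Finset.induction_on with
  | empty => funext y; simp [stmtFiberCount]
  | insert a s hnot ih =>
      rw [Finset.set_biUnion_insert, Finset.sum_insert hnot,
        stmtFiberCount_union, ih (hd.mono (by simp))]
      apply Set.disjoint_iUnion₂_right.mpr
      intro i hi
      exact hd (by simp) (by simp [hi]) (by rintro rfl; exact hnot hi)

variable [Nonempty X]

lemma stmt_continuousOn_invFunOn {φ : X → Y} (hφ : IsLocalHomeomorph φ) {U : Set X}
    (hU : IsOpen U) (hinj : InjOn φ U) : ContinuousOn (invFunOn φ U) (φ '' U) := by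
  rintro y ⟨x, hxU, rfl⟩
  obtain ⟨e, hx, hfe⟩ := hφ x
  have heq : EqOn (invFunOn φ U) e.symm (φ '' (U ∩ e.source)) := by
    rintro y' ⟨x', ⟨hx'U, hx'src⟩, rfl⟩
    have h1 : invFunOn φ U (φ x') ∈ U := invFunOn_mem ⟨x', hx'U, rfl⟩
    have h1' : φ (invFunOn φ U (φ x')) = φ x' := invFunOn_eq ⟨x', hx'U, rfl⟩
    have h2 : e.symm (φ x') = x' := by rw [hfe]; exact e.left_inv hx'src
    rw [h2]
    exact hinj h1 hx'U h1'
  have hVo : IsOpen (φ '' (U ∩ e.source)) := hφ.isOpenMap _ (hU.inter e.open_source)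
  have hyV : φ x ∈ φ '' (U ∩ e.source) := mem_image_of_mem φ ⟨hxU, hx⟩
  have hct : ContinuousAt e.symm (φ x) := by
    apply e.continuousAt_symm
    rw [hfe]; exact e.map_source hx
  have : ContinuousAt (invFunOn φ U) (φ x) :=
    hct.congr (Filter.eventuallyEq_of_mem (hVo.mem_nhds hyV) heq).symm
  exact this.continuousWithinAt

lemma stmt_measurableSet_inter_preimage {α β : Type*} [TopologicalSpace α] [MeasurableSpace α]
    [BorelSpace α] [TopologicalSpace β] [MeasurableSpace β] [BorelSpace β]
    {h : α → β} {s : Set α} (hcont : ContinuousOn h s) (hs : MeasurableSet s)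
    {t : Set β} (ht : MeasurableSet t) : MeasurableSet (s ∩ h ⁻¹' t) := by
  have hm : Measurable (s.restrict h) :=
    (continuousOn_iff_continuous_restrict.mp hcont).measurable
  have h2 := hs.subtype_image (hm ht)
  convert h2 using 1
  ext a
  constructor
  · rintro ⟨has, hat⟩
    exact ⟨⟨a, has⟩, hat, rfl⟩
  · rintro ⟨⟨b, hbs⟩, hbt, rfl⟩
    exact ⟨hbs, hbt⟩

variable [MeasurableSpace X] [BorelSpace X] [MeasurableSpace Y] [BorelSpace Y]

lemma stmt_image_eq {φ : X → Y} {U B : Set X} (hinj : InjOn φ U) (hBU : B ⊆ U) :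
    φ '' B = (φ '' U) ∩ (invFunOn φ U) ⁻¹' B := by
  ext y
  constructor
  · rintro ⟨x, hxB, rfl⟩
    refine ⟨mem_image_of_mem φ (hBU hxB), ?_⟩
    have h1 : invFunOn φ U (φ x) ∈ U := invFunOn_mem ⟨x, hBU hxB, rfl⟩
    have h2 : φ (invFunOn φ U (φ x)) = φ x := invFunOn_eq ⟨x, hBU hxB, rfl⟩
    have h3 : invFunOn φ U (φ x) = x := hinj h1 (hBU hxB) h2
    rwa [mem_preimage, h3]
  · rintro ⟨⟨x, hxU, rfl⟩, hpre⟩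
    exact ⟨invFunOn φ U (φ x), hpre, invFunOn_eq ⟨x, hxU, rfl⟩⟩

lemma stmt_measurableSet_image {φ : X → Y} (hφ : IsLocalHomeomorph φ) {U B : Set X}
    (hU : IsOpen U) (hinj : InjOn φ U) (hB : MeasurableSet B) (hBU : B ⊆ U) :
    MeasurableSet (φ '' B) := by
  rw [stmt_image_eq hinj hBU]
  exact stmt_measurableSet_inter_preimage (stmt_continuousOn_invFunOn hφ hU hinj)
    (hφ.isOpenMap U hU).measurableSet hB

lemma stmt_exists_cover {φ : X → Y} (hφ : IsLocalHomeomorph φ) {K : Set X} (hK : IsCompact K) :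
    ∃ (n : ℕ) (U : Fin n → Set X),
      (∀ i, IsOpen (U i)) ∧ (∀ i, InjOn φ (U i)) ∧ K ⊆ ⋃ i, U i := by
  have hmem : ∀ x : X, ∃ s : Set X, IsOpen s ∧ x ∈ s ∧ InjOn φ s := by
    intro x
    obtain ⟨e, hx, hfe⟩ := hφ x
    refine ⟨e.source, e.open_source, hx, ?_⟩
    rw [hfe]; exact e.injOn
  choose S hSo hSx hSinj using hmem
  obtain ⟨t, ht⟩ := hK.elim_finite_subcover S hSo (fun x _ => mem_iUnion.mpr ⟨x, hSx x⟩)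
  refine ⟨t.card, fun i => S ((t.equivFin.symm i) : X), fun i => hSo _, fun i => hSinj _, ?_⟩
  intro x hx
  obtain ⟨z, hzt, hz⟩ := mem_iUnion₂.mp (ht hx)
  refine mem_iUnion.mpr ⟨t.equivFin ⟨z, hzt⟩, ?_⟩
  simpa using hz

lemma stmt_decomp {φ : X → Y} (hφ : IsLocalHomeomorph φ) {A : Set X} (hA : MeasurableSet A)
    {n : ℕ} {U : Fin n → Set X} (hUo : ∀ i, IsOpen (U i)) (hUinj : ∀ i, InjOn φ (U i))
    (hcov : A ⊆ ⋃ i, U i) :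
    ∃ B : Fin n → Set X, (∀ i, MeasurableSet (φ '' B i)) ∧ (∀ i, φ '' B i ⊆ φ '' A) ∧
      stmtFiberCount φ A = fun y => ∑ i, (φ '' B i).indicator 1 y := by
  classical
  set B : Fin n → Set X := fun i => (A ∩ U i) \ ⋃ j, ⋃ (_ : j < i), U j with hB
  have hBU : ∀ i, B i ⊆ U i := fun i x hx => hx.1.2
  have hBA : ∀ i, B i ⊆ A := fun i x hx => hx.1.1
  have hBm : ∀ i, MeasurableSet (B i) := fun i =>
    ((hA.inter (hUo i).measurableSet).diff
      (MeasurableSet.iUnion fun j => MeasurableSet.iUnion fun _ => (hUo j).measurableSet))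
  have hdisj : ∀ i j, i < j → Disjoint (B i) (B j) := by
    intro i j hij
    rw [Set.disjoint_left]
    rintro x ⟨⟨_, hxUi⟩, _⟩ ⟨_, hnot⟩
    exact hnot (mem_iUnion₂.mpr ⟨i, hij, hxUi⟩)
  have hpair : (↑(Finset.univ : Finset (Fin n)) : Set (Fin n)).Pairwise (Disjoint on B) := by
    intro i _ j _ hij
    rcases lt_or_gt_of_ne hij with h | h
    · exact hdisj i j h
    · exact (hdisj j i h).symm
  have hUnion : ⋃ i ∈ (Finset.univ : Finset (Fin n)), B i = A := by
    apply Subset.antisymm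
    · intro x hx
      obtain ⟨i, -, hxi⟩ := mem_iUnion₂.mp hx
      exact hBA i hxi
    · intro x hx
      have hex : ∃ i, x ∈ U i := mem_iUnion.mp (hcov hx)
      set s : Finset (Fin n) := Finset.univ.filter (fun i => x ∈ U i) with hs
      have hsne : s.Nonempty := ⟨hex.choose, by simp [hs, hex.choose_spec]⟩
      set i₀ := s.min' hsne with hi₀
      have hxi : x ∈ U i₀ := (Finset.mem_filter.mp (s.min'_mem hsne)).2
      refine mem_iUnion₂.mpr ⟨i₀, Finset.mem_univ _, ⟨⟨hx, hxi⟩, ?_⟩⟩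
      intro hmem
      obtain ⟨j, hj, hxj⟩ := mem_iUnion₂.mp hmem
      exact absurd (s.min'_le j (by simp [hs, hxj])) (not_le.mpr hj)
  refine ⟨B, fun i => stmt_measurableSet_image hφ (hUo i) (hUinj i) (hBm i) (hBU i),
    fun i => image_mono (hBA i), ?_⟩
  have h1 : stmtFiberCount φ A = ∑ i, stmtFiberCount φ (B i) := by
    rw [← hUnion, stmtFiberCount_biUnion _ _ hpair]
  funext y
  rw [h1]
  simp only [Finset.sum_apply]
  congr 1
  funext i
  rw [stmtFiberCount_chart (hUinj i) (hBU i)]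

variable [T2Space X] [T2Space Y]

lemma stmt_measurable_fiberCount {φ : X → Y} (hφ : IsLocalHomeomorph φ) {K : Set X}
    (hK : IsCompact K) : Measurable (stmtFiberCount φ K) := by
  obtain ⟨n, U, hUo, hUinj, hcov⟩ := stmt_exists_cover hφ hK
  obtain ⟨B, hBm, -, hcount⟩ := stmt_decomp hφ hK.measurableSet hUo hUinj hcov
  rw [hcount]
  exact Finset.measurable_sum _ fun i _ => measurable_one.indicator (hBm i)

lemma stmt_lintegral_fiberCount_ne_top {φ : X → Y} (hφ : IsLocalHomeomorph φ) {K : Set X}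
    (hK : IsCompact K) (lam : Measure Y) [IsFiniteMeasureOnCompacts lam] :
    ∫⁻ y, stmtFiberCount φ K y ∂lam ≠ ⊤ := by
  obtain ⟨n, U, hUo, hUinj, hcov⟩ := stmt_exists_cover hφ hK
  obtain ⟨B, hBm, hBsub, hcount⟩ := stmt_decomp hφ hK.measurableSet hUo hUinj hcov
  rw [hcount, lintegral_finset_sum _ (fun i _ => measurable_one.indicator (hBm i))]
  apply ne_of_lt
  apply ENNReal.sum_lt_top.mpr
  intro i _
  rw [lintegral_indicator_one (hBm i)]
  exact lt_of_le_of_lt (measure_mono (hBsub i)) (hK.image hφ.continuous).measure_lt_top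

/-- The content on `X` obtained by pulling back `lam` along the local homeomorphism `φ`. -/
def stmtContent {φ : X → Y} (hφ : IsLocalHomeomorph φ) (lam : Measure Y)
    [IsFiniteMeasureOnCompacts lam] : Content X where
  toFun K := (∫⁻ y, stmtFiberCount φ (K : Set X) y ∂lam).toNNReal
  mono' K₁ K₂ h := ENNReal.toNNReal_mono (stmt_lintegral_fiberCount_ne_top hφ K₂.2 lam)
    (lintegral_mono (stmtFiberCount_mono h))
  sup_disjoint' K₁ K₂ hd _ _ := by
    have h1 : ∫⁻ y, stmtFiberCount φ (K₁ : Set X) y ∂lam ≠ ⊤ :=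
      stmt_lintegral_fiberCount_ne_top hφ K₁.2 lam
    have h2 : ∫⁻ y, stmtFiberCount φ (K₂ : Set X) y ∂lam ≠ ⊤ :=
      stmt_lintegral_fiberCount_ne_top hφ K₂.2 lam
    have hm : Measurable (stmtFiberCount φ (K₁ : Set X)) :=
      stmt_measurable_fiberCount hφ K₁.2
    have hco : ((K₁ ⊔ K₂ : TopologicalSpace.Compacts X) : Set X) = (K₁ : Set X) ∪ K₂ := rfl
    simp only [hco]
    rw [stmtFiberCount_union hd]
    simp only [Pi.add_apply]
    rw [← ENNReal.toNNReal_add h1 h2]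
    congr 1
    exact lintegral_add_left hm _
  sup_le' K₁ K₂ := by
    have hco : ((K₁ ⊔ K₂ : TopologicalSpace.Compacts X) : Set X) = (K₁ : Set X) ∪ K₂ := rfl
    simp only [hco]
    have h1 : ∫⁻ y, stmtFiberCount φ (K₁ : Set X) y ∂lam ≠ ⊤ :=
      stmt_lintegral_fiberCount_ne_top hφ K₁.2 lam
    have h2 : ∫⁻ y, stmtFiberCount φ (K₂ : Set X) y ∂lam ≠ ⊤ :=
      stmt_lintegral_fiberCount_ne_top hφ K₂.2 lam
    have hle : ∫⁻ y, stmtFiberCount φ ((K₁ : Set X) ∪ K₂) y ∂lam ≤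
        (∫⁻ y, stmtFiberCount φ (K₁ : Set X) y ∂lam) +
          ∫⁻ y, stmtFiberCount φ (K₂ : Set X) y ∂lam := by
      calc ∫⁻ y, stmtFiberCount φ ((K₁ : Set X) ∪ K₂) y ∂lam
          ≤ ∫⁻ y, stmtFiberCount φ (K₁ : Set X) y + stmtFiberCount φ (K₂ : Set X) y ∂lam :=
            lintegral_mono fun y => stmtFiberCount_union_le _ _ y
        _ = _ := lintegral_add_left (stmt_measurable_fiberCount hφ K₁.2) _
    have hmono := ENNReal.toNNReal_mono (ENNReal.add_ne_top.mpr ⟨h1, h2⟩) hle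
    rwa [ENNReal.toNNReal_add h1 h2] at hmono

lemma stmtContent_apply {φ : X → Y} (hφ : IsLocalHomeomorph φ) (lam : Measure Y)
    [IsFiniteMeasureOnCompacts lam] (K : TopologicalSpace.Compacts X) :
    (stmtContent hφ lam) K = ∫⁻ y, stmtFiberCount φ (K : Set X) y ∂lam :=
  ENNReal.coe_toNNReal (stmt_lintegral_fiberCount_ne_top hφ K.2 lam)

/-- The pullback measure. -/
def stmtMeasure {φ : X → Y} (hφ : IsLocalHomeomorph φ) (lam : Measure Y)
    [IsFiniteMeasureOnCompacts lam] : Measure X := (stmtContent hφ lam).measure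

instance stmtMeasure_regular {φ : X → Y} (hφ : IsLocalHomeomorph φ) (lam : Measure Y)
    [IsFiniteMeasureOnCompacts lam] [LocallyCompactSpace X] :
    (stmtMeasure hφ lam).Regular := by
  unfold stmtMeasure
  infer_instance

lemma stmtMeasure_chart_open {φ : X → Y} (hφ : IsLocalHomeomorph φ) (lam : Measure Y)
    [lam.Regular] {U : Set X} (hU : IsOpen U) (hinj : InjOn φ U) :
    stmtMeasure hφ lam U = lam (φ '' U) := by
  rw [stmtMeasure, Content.measure_apply _ hU.measurableSet,
    Content.outerMeasure_of_isOpen _ U hU]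
  apply le_antisymm
  · apply iSup₂_le
    intro K hKU
    calc ((stmtContent hφ lam) K : ℝ≥0∞)
        = ∫⁻ y, stmtFiberCount φ (K : Set X) y ∂lam := stmtContent_apply hφ lam K
      _ = ∫⁻ y, (φ '' (K : Set X)).indicator 1 y ∂lam := by
          rw [stmtFiberCount_chart hinj hKU]
      _ = lam (φ '' (K : Set X)) :=
          lintegral_indicator_one ((K.2.image hφ.continuous).isClosed.measurableSet)
      _ ≤ lam (φ '' U) := measure_mono (image_mono hKU)
  · rw [(hφ.isOpenMap U hU).measure_eq_iSup_isCompact lam]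
    apply iSup₂_le
    intro L hLsub
    apply iSup_le
    intro hLc
    set K : Set X := invFunOn φ U '' L with hK
    have hKc : IsCompact K :=
      hLc.image_of_continuousOn ((stmt_continuousOn_invFunOn hφ hU hinj).mono hLsub)
    have hKU : K ⊆ U := by
      rintro x ⟨y, hyL, rfl⟩
      obtain ⟨x', hx'U, rfl⟩ := hLsub hyL
      exact invFunOn_mem ⟨x', hx'U, rfl⟩
    have hKimg : φ '' K = L := by
      apply Subset.antisymm
      · rintro y ⟨x, ⟨y', hy'L, rfl⟩, rfl⟩
        obtain ⟨x', hx'U, rfl⟩ := hLsub hy'L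
        rwa [invFunOn_eq (f := φ) ⟨x', hx'U, rfl⟩]
      · intro y hyL
        obtain ⟨x', hx'U, rfl⟩ := hLsub hyL
        exact ⟨invFunOn φ U (φ x'), ⟨φ x', hyL, rfl⟩, invFunOn_eq ⟨x', hx'U, rfl⟩⟩
    have hval : ((stmtContent hφ lam) ⟨K, hKc⟩ : ℝ≥0∞) = lam L := by
      calc ((stmtContent hφ lam) ⟨K, hKc⟩ : ℝ≥0∞)
          = ∫⁻ y, stmtFiberCount φ K y ∂lam := stmtContent_apply hφ lam ⟨K, hKc⟩
        _ = ∫⁻ y, (φ '' K).indicator 1 y ∂lam := by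
            rw [stmtFiberCount_chart hinj hKU]
        _ = lam (φ '' K) :=
            lintegral_indicator_one ((hKc.image hφ.continuous).isClosed.measurableSet)
        _ = lam L := by rw [hKimg]
    rw [← hval]
    exact Content.le_innerContent _ _ ⟨U, hU⟩ hKU

lemma stmt_measurable_indicator {φ : X → Y} (hφ : IsLocalHomeomorph φ) {U : Set X}
    (hU : IsOpen U) (hinj : InjOn φ U) {f : X → ℝ} (hf : Continuous f) :
    Measurable ((φ '' U).indicator (fun y => f (invFunOn φ U y))) := by
  intro t ht
  rw [Set.indicator_preimage]
  have h1 : MeasurableSet ((fun y => f (invFunOn φ U y)) ⁻¹' t ∩ φ '' U) := by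
    rw [Set.inter_comm]
    exact stmt_measurableSet_inter_preimage
      (hf.comp_continuousOn (stmt_continuousOn_invFunOn hφ hU hinj))
      (hφ.isOpenMap U hU).measurableSet ht
  have h2 : MeasurableSet ((fun _ : Y => (0 : ℝ)) ⁻¹' t \ φ '' U) :=
    (measurable_const ht).diff (hφ.isOpenMap U hU).measurableSet
  exact h1.union h2

lemma stmt_lintegral_eq {φ : X → Y} (hφ : IsLocalHomeomorph φ) (lam : Measure Y)
    [lam.Regular] {U : Set X} (hU : IsOpen U) (hinj : InjOn φ U)
    {f : X → ℝ} (hf : Continuous f) (hsupp : tsupport f ⊆ U) (hf0 : 0 ≤ f) :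
    ∫⁻ x, ENNReal.ofReal (f x) ∂(stmtMeasure hφ lam) =
      ∫⁻ y, ENNReal.ofReal ((φ '' U).indicator (fun y => f (invFunOn φ U y)) y) ∂lam := by
  set g := (φ '' U).indicator (fun y => f (invFunOn φ U y)) with hg
  have hgm : Measurable g := stmt_measurable_indicator hφ hU hinj hf
  have hg0 : 0 ≤ g := fun y => Set.indicator_nonneg (fun y _ => hf0 _) y
  rw [lintegral_eq_lintegral_meas_lt _ (Filter.Eventually.of_forall hf0)
      hf.measurable.aemeasurable,
    lintegral_eq_lintegral_meas_lt _ (Filter.Eventually.of_forall hg0) hgm.aemeasurable]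
  apply setLIntegral_congr_fun measurableSet_Ioi
  intro t ht
  have hAopen : IsOpen {x | t < f x} := isOpen_lt continuous_const hf
  have hAsub : {x | t < f x} ⊆ U := fun x hx =>
    hsupp (subset_tsupport f (mem_support.mpr (ne_of_gt (lt_trans ht hx))))
  have himg : φ '' {x | t < f x} = {y | t < g y} := by
    ext y
    constructor
    · rintro ⟨x, hx, rfl⟩
      have hxU : x ∈ U := hAsub hx
      have hinv : invFunOn φ U (φ x) = x :=
        hinj (invFunOn_mem ⟨x, hxU, rfl⟩) hxU (invFunOn_eq ⟨x, hxU, rfl⟩)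
      have : g (φ x) = f x := by
        rw [hg, Set.indicator_of_mem (mem_image_of_mem φ hxU), hinv]
      simpa [this] using hx
    · intro hy
      have hy0 : 0 < g y := lt_trans ht hy
      have hyU : y ∈ φ '' U := by
        by_contra h
        rw [hg, Set.indicator_of_notMem h] at hy0
        exact lt_irrefl 0 hy0
      have heq : g y = f (invFunOn φ U y) := Set.indicator_of_mem hyU _
      refine ⟨invFunOn φ U y, ?_, invFunOn_eq (f := φ) hyU⟩
      rw [mem_setOf_eq, ← heq]
      exact hy
  have := stmtMeasure_chart_open hφ lam hAopen (hinj.mono hAsub)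
  beta_reduce
  rw [this, himg]

lemma stmt_integral_eq_nonneg {φ : X → Y} (hφ : IsLocalHomeomorph φ) (lam : Measure Y)
    [lam.Regular] {U : Set X} (hU : IsOpen U) (hinj : InjOn φ U)
    {f : X → ℝ} (hf : Continuous f) (hsupp : tsupport f ⊆ U) (hf0 : 0 ≤ f) :
    ∫ x, f x ∂(stmtMeasure hφ lam) =
      ∫ y, (φ '' U).indicator (fun y => f (invFunOn φ U y)) y ∂lam := by
  have hgm : Measurable ((φ '' U).indicator (fun y => f (invFunOn φ U y))) :=
    stmt_measurable_indicator hφ hU hinj hf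
  have hg0 : (0 : Y → ℝ) ≤ (φ '' U).indicator (fun y => f (invFunOn φ U y)) :=
    fun y => Set.indicator_nonneg (fun y _ => hf0 _) y
  rw [integral_eq_lintegral_of_nonneg_ae (Filter.Eventually.of_forall hf0)
      hf.aestronglyMeasurable,
    integral_eq_lintegral_of_nonneg_ae (Filter.Eventually.of_forall hg0)
      hgm.aestronglyMeasurable,
    stmt_lintegral_eq hφ lam hU hinj hf hsupp hf0]

lemma stmt_integral_eq {φ : X → Y} (hφ : IsLocalHomeomorph φ) (lam : Measure Y)
    [lam.Regular] [LocallyCompactSpace X] {U : Set X} (hU : IsOpen U) (hinj : InjOn φ U)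
    {f : X → ℝ} (hf : Continuous f) (hfc : HasCompactSupport f) (hsupp : tsupport f ⊆ U) :
    ∫ x, f x ∂(stmtMeasure hφ lam) =
      ∫ y, (φ '' U).indicator (fun y => f (invFunOn φ U y)) y ∂lam := by
  set f₁ : X → ℝ := fun x => max (f x) 0 with hf₁
  set f₂ : X → ℝ := fun x => max (-f x) 0 with hf₂
  have hf₁c : Continuous f₁ := hf.max continuous_const
  have hf₂c : Continuous f₂ := hf.neg.max continuous_const
  have hsub₁ : support f₁ ⊆ support f := by
    intro x hx
    simp only [hf₁, mem_support, ne_eq] at hx ⊢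
    intro h; apply hx; rw [h]; simp
  have hsub₂ : support f₂ ⊆ support f := by
    intro x hx
    simp only [hf₂, mem_support, ne_eq] at hx ⊢
    intro h; apply hx; rw [h]; simp
  have hts₁ : tsupport f₁ ⊆ tsupport f := closure_mono hsub₁
  have hts₂ : tsupport f₂ ⊆ tsupport f := closure_mono hsub₂
  have hfc₁ : HasCompactSupport f₁ := hfc.of_isClosed_subset isClosed_closure hts₁
  have hfc₂ : HasCompactSupport f₂ := hfc.of_isClosed_subset isClosed_closure hts₂
  have hnn₁ : 0 ≤ f₁ := fun x => le_max_right _ _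
  have hnn₂ : 0 ≤ f₂ := fun x => le_max_right _ _
  have hfeq : ∀ x, f x = f₁ x - f₂ x := fun x =>
    (max_zero_sub_max_neg_zero_eq_self (f x)).symm
  -- the pushed-forward functions
  set g : Y → ℝ := (φ '' U).indicator (fun y => f (invFunOn φ U y)) with hg
  set g₁ : Y → ℝ := (φ '' U).indicator (fun y => f₁ (invFunOn φ U y)) with hg₁
  set g₂ : Y → ℝ := (φ '' U).indicator (fun y => f₂ (invFunOn φ U y)) with hg₂
  have hgeq : ∀ y, g y = g₁ y - g₂ y := by
    intro y
    by_cases hy : y ∈ φ '' U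
    · simp only [hg, hg₁, hg₂, Set.indicator_of_mem hy]
      exact hfeq _
    · simp [hg, hg₁, hg₂, Set.indicator_of_notMem hy]
  -- integrability
  have hint₁ : Integrable f₁ (stmtMeasure hφ lam) :=
    hf₁c.integrable_of_hasCompactSupport hfc₁
  have hint₂ : Integrable f₂ (stmtMeasure hφ lam) :=
    hf₂c.integrable_of_hasCompactSupport hfc₂
  have hgint : ∀ (fi : X → ℝ), Continuous fi → HasCompactSupport fi → tsupport fi ⊆ U →
      0 ≤ fi → Integrable fi (stmtMeasure hφ lam) →
      Integrable ((φ '' U).indicator (fun y => fi (invFunOn φ U y))) lam := by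
    intro fi hfi hfic hfis hfinn hfiint
    have hm : Measurable ((φ '' U).indicator (fun y => fi (invFunOn φ U y))) :=
      stmt_measurable_indicator hφ hU hinj hfi
    have hnn : (0 : Y → ℝ) ≤ (φ '' U).indicator (fun y => fi (invFunOn φ U y)) :=
      fun y => Set.indicator_nonneg (fun y _ => hfinn _) y
    refine ⟨hm.aestronglyMeasurable, ?_⟩
    rw [hasFiniteIntegral_iff_ofReal (Filter.Eventually.of_forall hnn),
      ← stmt_lintegral_eq hφ lam hU hinj hfi hfis hfinn]
    exact (hasFiniteIntegral_iff_ofReal (Filter.Eventually.of_forall hfinn)).mp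
      hfiint.hasFiniteIntegral
  have hgint₁ : Integrable g₁ lam :=
    hgint f₁ hf₁c hfc₁ (hts₁.trans hsupp) hnn₁ hint₁
  have hgint₂ : Integrable g₂ lam :=
    hgint f₂ hf₂c hfc₂ (hts₂.trans hsupp) hnn₂ hint₂
  calc ∫ x, f x ∂(stmtMeasure hφ lam)
      = ∫ x, (f₁ x - f₂ x) ∂(stmtMeasure hφ lam) := by
        congr 1; funext x; exact hfeq x
    _ = (∫ x, f₁ x ∂(stmtMeasure hφ lam)) - ∫ x, f₂ x ∂(stmtMeasure hφ lam) :=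
        integral_sub hint₁ hint₂
    _ = (∫ y, g₁ y ∂lam) - ∫ y, g₂ y ∂lam := by
        rw [stmt_integral_eq_nonneg hφ lam hU hinj hf₁c (hts₁.trans hsupp) hnn₁,
          stmt_integral_eq_nonneg hφ lam hU hinj hf₂c (hts₂.trans hsupp) hnn₂]
    _ = ∫ y, (g₁ y - g₂ y) ∂lam := (integral_sub hgint₁ hgint₂).symm
    _ = ∫ y, g y ∂lam := by
        congr 1; funext y; exact (hgeq y).symm

lemma stmt_le_on_compacts [LocallyCompactSpace X] {mu1 mu2 : Measure X}
    [IsFiniteMeasureOnCompacts mu1] [mu2.OuterRegular] [IsFiniteMeasureOnCompacts mu2]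
    (hint : ∀ f : X → ℝ, Continuous f → HasCompactSupport f →
      ∫ x, f x ∂mu1 = ∫ x, f x ∂mu2)
    {K : Set X} (hK : IsCompact K) : mu1 K ≤ mu2 K := by
  rw [Set.measure_eq_iInf_isOpen K mu2]
  refine le_iInf fun V => le_iInf fun hKV => le_iInf fun hVo => ?_
  obtain ⟨L, hLc, hKL, hLV⟩ := exists_compact_between hK hVo hKV
  obtain ⟨g, hg1, hg0, hgc, hgmem⟩ := exists_continuous_one_zero_of_isCompact hK
    isOpen_interior.isClosed_compl (disjoint_compl_right_iff_subset.mpr hKL)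
  have hintg1 : Integrable (fun x => g x) mu1 := g.continuous.integrable_of_hasCompactSupport hgc
  have hintg2 : Integrable (fun x => g x) mu2 := g.continuous.integrable_of_hasCompactSupport hgc
  have hindK : Integrable (K.indicator (fun _ => (1 : ℝ))) mu1 :=
    (integrable_indicator_iff hK.measurableSet).mpr
      (integrableOn_const hK.measure_lt_top.ne)
  have hindL : Integrable (L.indicator (fun _ => (1 : ℝ))) mu2 :=
    (integrable_indicator_iff hLc.measurableSet).mpr
      (integrableOn_const hLc.measure_lt_top.ne)
  have h1 : (mu1 K).toReal ≤ ∫ x, g x ∂mu1 := by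
    rw [← measureReal_def, ← integral_indicator_one hK.measurableSet]
    apply integral_mono hindK hintg1
    intro x
    by_cases hx : x ∈ K
    · rw [Set.indicator_of_mem hx]
      exact le_of_eq (hg1 hx).symm
    · rw [Set.indicator_of_notMem hx]
      exact (hgmem x).1
  have h2 : ∫ x, g x ∂mu2 ≤ (mu2 L).toReal := by
    rw [← measureReal_def, ← integral_indicator_one hLc.measurableSet]
    apply integral_mono hintg2 hindL
    intro x
    by_cases hx : x ∈ L
    · rw [Set.indicator_of_mem hx]
      exact (hgmem x).2
    · rw [Set.indicator_of_notMem hx]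
      exact le_of_eq (hg0 fun hmem => hx (interior_subset hmem))
  have h3 : (mu1 K).toReal ≤ (mu2 L).toReal := by
    calc (mu1 K).toReal ≤ ∫ x, g x ∂mu1 := h1
      _ = ∫ x, g x ∂mu2 := hint _ g.continuous hgc
      _ ≤ (mu2 L).toReal := h2
  calc mu1 K ≤ mu2 L :=
      (ENNReal.toReal_le_toReal hK.measure_lt_top.ne hLc.measure_lt_top.ne).mp h3
    _ ≤ mu2 V := measure_mono hLV

lemma stmt_eq_of_integral_eq [LocallyCompactSpace X] {mu1 mu2 : Measure X}
    (hr1 : mu1.Regular) (hr2 : mu2.Regular)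
    (hint : ∀ f : X → ℝ, Continuous f → HasCompactSupport f →
      ∫ x, f x ∂mu1 = ∫ x, f x ∂mu2) : mu1 = mu2 := by
  have hcomp : ∀ {K : Set X}, IsCompact K → mu1 K = mu2 K := fun {K} hK =>
    le_antisymm (stmt_le_on_compacts hint hK)
      (stmt_le_on_compacts (fun f hf hfc => (hint f hf hfc).symm) hK)
  have hopen : ∀ V : Set X, IsOpen V → mu1 V = mu2 V := by
    intro V hV
    rw [hV.measure_eq_iSup_isCompact mu1, hV.measure_eq_iSup_isCompact mu2]
    exact iSup_congr fun K => iSup_congr fun _ => iSup_congr fun hKc => hcomp hKc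
  ext s hs
  rw [Set.measure_eq_iInf_isOpen s mu1, Set.measure_eq_iInf_isOpen s mu2]
  exact iInf_congr fun V => iInf_congr fun _ => iInf_congr fun hVo => hopen V hVo

lemma stmt_cc_integral_eq_of_prop {φ : X → Y} (hφ : IsLocalHomeomorph φ) (lam : Measure Y)
    {mu1 mu2 : Measure X} [IsFiniteMeasureOnCompacts mu1] [IsFiniteMeasureOnCompacts mu2]
    [LocallyCompactSpace X]
    (h1 : ∀ U : Set X, IsOpen U → InjOn φ U →
      ∀ f : X → ℝ, Continuous f → HasCompactSupport f → tsupport f ⊆ U →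
        ∫ x, f x ∂mu1 = ∫ y, (φ '' U).indicator (fun y => f (invFunOn φ U y)) y ∂lam)
    (h2 : ∀ U : Set X, IsOpen U → InjOn φ U →
      ∀ f : X → ℝ, Continuous f → HasCompactSupport f → tsupport f ⊆ U →
        ∫ x, f x ∂mu2 = ∫ y, (φ '' U).indicator (fun y => f (invFunOn φ U y)) y ∂lam)
    {f : X → ℝ} (hf : Continuous f) (hfc : HasCompactSupport f) :
    ∫ x, f x ∂mu1 = ∫ x, f x ∂mu2 := by
  obtain ⟨n, U, hUo, hUinj, hcov⟩ := stmt_exists_cover hφ hfc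
  obtain ⟨g, hgsupp, hgsum, hgmem, hgcp⟩ :=
    exists_continuous_sum_one_of_isOpen_isCompact hUo hfc hcov
  have hfeq : ∀ x, f x = ∑ i, g i x * f x := by
    intro x
    by_cases hx : x ∈ tsupport f
    · have hs : (∑ i, ⇑(g i)) x = (1 : X → ℝ) x := hgsum hx
      rw [Finset.sum_apply] at hs
      calc f x = (∑ i, g i x) * f x := by rw [hs]; exact (one_mul _).symm
        _ = ∑ i, g i x * f x := Finset.sum_mul ..
    · rw [image_eq_zero_of_notMem_tsupport hx]
      simp
  have hcont : ∀ i, Continuous fun x => g i x * f x := fun i => (g i).continuous.mul hf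
  have hcpt : ∀ i, HasCompactSupport fun x => g i x * f x := fun i => hfc.mul_left
  have hts : ∀ i, tsupport (fun x => g i x * f x) ⊆ U i := fun i =>
    (tsupport_mul_subset_left).trans (hgsupp i)
  calc ∫ x, f x ∂mu1
      = ∫ x, ∑ i, g i x * f x ∂mu1 := by congr 1; funext x; exact hfeq x
    _ = ∑ i, ∫ x, g i x * f x ∂mu1 := integral_finset_sum _ fun i _ =>
        (hcont i).integrable_of_hasCompactSupport (hcpt i)
    _ = ∑ i, ∫ x, g i x * f x ∂mu2 := by
        apply Finset.sum_congr rfl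
        intro i _
        rw [h1 (U i) (hUo i) (hUinj i) _ (hcont i) (hcpt i) (hts i),
          h2 (U i) (hUo i) (hUinj i) _ (hcont i) (hcpt i) (hts i)]
    _ = ∫ x, ∑ i, g i x * f x ∂mu2 := (integral_finset_sum _ fun i _ =>
        (hcont i).integrable_of_hasCompactSupport (hcpt i)).symm
    _ = ∫ x, f x ∂mu2 := by congr 1; funext x; exact (hfeq x).symm

end StmtAux

/-- Let `X`, `Y` be locally compact Hausdorff spaces, `φ : X → Y` a surjective
local homeomorphism and `λ` a Radon measure on `Y`. Then there is a unique
(Radon) measure `φ*(λ)` on `X` such that for every open `U ⊆ X` on which `φ`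
restricts to a homeomorphism and every `f ∈ C_c(X)` supported in `U`,
`∫_X f dφ*(λ) = ∫_Y (f ∘ (φ|_U)⁻¹ extended by zero) dλ`. -/
theorem stmt_16 {X Y : Type*} [TopologicalSpace X] [LocallyCompactSpace X] [T2Space X]
    [Nonempty X] [TopologicalSpace Y] [LocallyCompactSpace Y] [T2Space Y]
    [MeasurableSpace X] [BorelSpace X] [MeasurableSpace Y] [BorelSpace Y]
    (φ : X → Y) (hφ : IsLocalHomeomorph φ) (hsurj : Function.Surjective φ)
    (lam : Measure Y) [lam.Regular] :
    ∃! mu : Measure X, mu.Regular ∧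
      ∀ U : Set X, IsOpen U → Set.InjOn φ U →
        ∀ f : X → ℝ, Continuous f → HasCompactSupport f → tsupport f ⊆ U →
          ∫ x, f x ∂mu =
            ∫ y, Set.indicator (φ '' U) (fun y => f (Function.invFunOn φ U y)) y ∂lam := by
  refine ⟨stmtMeasure hφ lam, ⟨stmtMeasure_regular hφ lam, ?_⟩, ?_⟩
  · intro U hU hinj f hf hfc hsupp
    exact stmt_integral_eq hφ lam hU hinj hf hfc hsupp
  · rintro ν ⟨hνreg, hνprop⟩
    haveI := hνreg
    apply stmt_eq_of_integral_eq hνreg (stmtMeasure_regular hφ lam)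
    intro f hf hfc
    exact stmt_cc_integral_eq_of_prop hφ lam hνprop
      (fun U hU hinj f' hf' hfc' hsupp' => stmt_integral_eq hφ lam hU hinj hf' hfc' hsupp')
      hf hfc
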